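/- For all integers m ≥ 0 and k ≥ 1, Σ_{i=0}^{m} C(m,i) (q−1)^i E_{i,q}^{(k,k)} = (1+q)^k / ∏_{i=0}^{k−1} (1 + q^{m+k−i}). -/

import Mathlib

open Finset

/-- The q-number `[x]_q = (1 - q^x)/(1 - q)`, with `q^x = exp (x * log q)` (rpow). -/
noncomputable def qNum (q x : ℝ) : ℝ := (1 - q ^ x) / (1 - q)

/-- `[l]_{-q} = (1 - (-q)^l)/(1 + q)` for a natural number `l`. -/
noncomputable def qNumNeg (q : ℝ) (l : ℕ) : ℝ := (1 - (-q) ^ l) / (1 + q)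

/-- The higher-order q-Euler polynomial
`E_{m,q}^{(h,k)}(x) = ((1+q)^k/(1-q)^m) * Σ_{j=0}^m C(m,j) (-1)^j q^{jx} / Π_{i=0}^{k-1} (1 + q^{h+j-i})`. -/
noncomputable def qE (q : ℝ) (h : ℤ) (k m : ℕ) (x : ℝ) : ℝ :=
  ((1 + q) ^ k / (1 - q) ^ m) *
    ∑ j ∈ Finset.range (m + 1),
      (m.choose j : ℝ) * (-1) ^ j * q ^ ((j : ℝ) * x) /
        ∏ i ∈ Finset.range k, (1 + q ^ ((h : ℝ) + (j : ℝ) - (i : ℝ)))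

lemma key_alt (m j : ℕ) (hj : j ≤ m) :
    ∑ i ∈ Finset.range (m + 1), (-1 : ℝ) ^ i * (m.choose i : ℝ) * (i.choose j : ℝ)
      = if j = m then (-1 : ℝ) ^ m else 0 := by
  have h1 : ∑ i ∈ Finset.range (m + 1), (-1 : ℝ) ^ i * (m.choose i : ℝ) * (i.choose j : ℝ)
      = ∑ i ∈ Finset.Ico j (m + 1), (-1 : ℝ) ^ i * (m.choose i : ℝ) * (i.choose j : ℝ) := by
    rw [Finset.range_eq_Ico, ← Finset.sum_Ico_consecutive _ (Nat.zero_le j) (by omega)]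
    have : ∀ i ∈ Finset.Ico 0 j, (-1 : ℝ) ^ i * (m.choose i : ℝ) * (i.choose j : ℝ) = 0 := by
      intro i hi
      simp only [Finset.mem_Ico] at hi
      rw [Nat.choose_eq_zero_of_lt hi.2]
      simp
    rw [Finset.sum_eq_zero this, zero_add]
  rw [h1, Finset.sum_Ico_eq_sum_range]
  have h2 : ∀ t ∈ Finset.range (m + 1 - j),
      (-1 : ℝ) ^ (j + t) * (m.choose (j + t) : ℝ) * ((j + t).choose j : ℝ)
        = ((-1 : ℝ) ^ j * (m.choose j : ℝ)) * ((-1 : ℝ) ^ t * ((m - j).choose t : ℝ)) := by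
    intro t ht
    simp only [Finset.mem_range] at ht
    have hle : j + t ≤ m := by omega
    have := Nat.choose_mul (n := m) (Nat.le_add_right j t)
    have hcast : (m.choose (j + t) : ℝ) * ((j + t).choose j : ℝ)
        = (m.choose j : ℝ) * ((m - j).choose t : ℝ) := by
      rw [← Nat.cast_mul, ← Nat.cast_mul, this]
      simp
    rw [pow_add]
    linear_combination ((-1:ℝ)^j * (-1)^t) * hcast
  rw [Finset.sum_congr rfl h2, ← Finset.mul_sum]
  have hrw : m + 1 - j = (m - j) + 1 := by omega
  rw [hrw]
  have halt : ∑ t ∈ Finset.range ((m - j) + 1), (-1 : ℝ) ^ t * ((m - j).choose t : ℝ)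
      = if m - j = 0 then 1 else 0 := by
    have := @Int.alternating_sum_range_choose (m - j)
    have := congrArg (Int.cast : ℤ → ℝ) this
    push_cast at this
    rw [← this]
  rw [halt]
  by_cases hjm : j = m
  · subst hjm; simp
  · rw [if_neg hjm, if_neg (by omega)]
    simp


theorem stmt_13 (q : ℝ) (hq : 0 < q) (hq1 : q ≠ 1) (m k : ℕ) (hk : 1 ≤ k) :
    ∑ i ∈ Finset.range (m + 1), (m.choose i : ℝ) * (q - 1) ^ i * qE q k k i 0
      = (1 + q) ^ k /
          ∏ i ∈ Finset.range k, (1 + q ^ ((m : ℝ) + (k : ℝ) - (i : ℝ))) := by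
  set P : ℕ → ℝ := fun j => ∏ i ∈ Finset.range k, (1 + q ^ ((k : ℝ) + (j : ℝ) - (i : ℝ))) with hP
  have hq1' : (1 : ℝ) - q ≠ 0 := fun h => hq1 (by linarith)
  have hPpos : ∀ j : ℕ, 0 < P j := by
    intro j
    apply Finset.prod_pos
    intro i _
    have := Real.rpow_pos_of_pos hq ((k : ℝ) + (j : ℝ) - (i : ℝ))
    linarith
  have step1 : ∀ i ∈ Finset.range (m + 1),
      (m.choose i : ℝ) * (q - 1) ^ i * qE q k k i 0
        = ∑ j ∈ Finset.range (m + 1),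
            ((-1 : ℝ) ^ i * (m.choose i : ℝ) * (i.choose j : ℝ)) *
              ((1 + q) ^ k * (-1) ^ j / P j) := by
    intro i hi
    simp only [Finset.mem_range] at hi
    have hext : qE q k k i 0
        = ((1 + q) ^ k / (1 - q) ^ i) *
            ∑ j ∈ Finset.range (m + 1), (i.choose j : ℝ) * (-1) ^ j / P j := by
      unfold qE
      simp only [mul_zero, Real.rpow_zero, mul_one, Int.cast_natCast]
      congr 1
      apply Finset.sum_subset (Finset.range_subset_range.mpr (by omega))
      intro j _ hj
      simp only [Finset.mem_range, not_lt] at hj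
      rw [Nat.choose_eq_zero_of_lt (by omega)]
      simp
    rw [hext]
    rw [show (m.choose i : ℝ) * (q - 1) ^ i *
        (((1 + q) ^ k / (1 - q) ^ i) * ∑ j ∈ Finset.range (m + 1), (i.choose j : ℝ) * (-1) ^ j / P j)
        = ∑ j ∈ Finset.range (m + 1),
            (m.choose i : ℝ) * (q - 1) ^ i *
              (((1 + q) ^ k / (1 - q) ^ i) * ((i.choose j : ℝ) * (-1) ^ j / P j)) by
      rw [Finset.mul_sum, Finset.mul_sum]]
    apply Finset.sum_congr rfl
    intro j _
    have hpow : (q - 1 : ℝ) ^ i = (-1) ^ i * (1 - q) ^ i := by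
      rw [← mul_pow]; ring_nf
    rw [hpow]
    field_simp
  rw [Finset.sum_congr rfl step1, Finset.sum_comm]
  have step2 : ∀ j ∈ Finset.range (m + 1),
      ∑ i ∈ Finset.range (m + 1),
          ((-1 : ℝ) ^ i * (m.choose i : ℝ) * (i.choose j : ℝ)) *
            ((1 + q) ^ k * (-1) ^ j / P j)
        = (if j = m then (-1 : ℝ) ^ m else 0) * ((1 + q) ^ k * (-1) ^ j / P j) := by
    intro j hj
    simp only [Finset.mem_range] at hj
    rw [← Finset.sum_mul, key_alt m j (by omega)]
  rw [Finset.sum_congr rfl step2]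
  rw [Finset.sum_eq_single_of_mem m (Finset.self_mem_range_succ m)
    (by intro b _ hb; rw [if_neg hb, zero_mul])]
  rw [if_pos rfl]
  have hne : P m ≠ 0 := (hPpos m).ne'
  have hmm : ((-1 : ℝ) ^ m) * ((-1 : ℝ) ^ m) = 1 := by
    rw [← mul_pow]; norm_num
  have hPeq : P m = ∏ i ∈ Finset.range k, (1 + q ^ ((m : ℝ) + (k : ℝ) - (i : ℝ))) := by
    apply Finset.prod_congr rfl
    intro i _
    congr 1
    ring_nf
  rw [← hPeq]
  field_simp
  linear_combination hmm
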